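/- Let c0 > 0 = c1, λ0, λ1 > 0, y0 ≤ 0, y1 = −y0. Set a = 1/c0, α = λ0/c0, and define f0(t) = ((λ1 e^{y0})^{α}/Γ(α)) (t−a)^{α−1} e^{−λ1 e^{y0}(t−a)} 1_{t > a} and f1(t) = (λ1^{α+1}/Γ(α+1)) (t − a e^{−y1})^{α} e^{−λ1 (t − a e^{−y1})} 1_{t > a e^{−y1}}. Then f0 and f1 are probability density functions, and they satisfy: for all t > a, f0(t) = α (t−a)^{α−1} ∫_{t e^{y0}}^{∞} (u e^{−y0} − a)^{−α} f1(u) du; and for all t > a e^{−y1}, f1(t) = λ1 e^{−λ1 t} ∫_{a}^{t e^{y1}} e^{λ1 u e^{−y1}} f0(u) du. -/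

import Mathlib

open MeasureTheory intervalIntegral


lemma gamma_shift_norm (α β s : ℝ) (hα : 0 < α) (hβ : 0 < β) :
    ∫ t : ℝ, (if s < t then (β ^ α / Real.Gamma α) * (t - s) ^ (α - 1)
        * Real.exp (-β * (t - s)) else 0) = 1 := by
  have hΓ : 0 < Real.Gamma α := Real.Gamma_pos_of_pos hα
  have key : ∀ t : ℝ, (if s < t then (β ^ α / Real.Gamma α) * (t - s) ^ (α - 1)
      * Real.exp (-β * (t - s)) else 0)
      = (fun x : ℝ => if 0 < x then (β ^ α / Real.Gamma α) * x ^ (α - 1)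
        * Real.exp (-β * x) else 0) (t - s) := by
    intro t; simp only [sub_pos]
  simp_rw [key]
  rw [integral_sub_right_eq_self (fun x : ℝ => if 0 < x then (β ^ α / Real.Gamma α) * x ^ (α - 1)
        * Real.exp (-β * x) else 0) s]
  have hind : (fun x : ℝ => if 0 < x then (β ^ α / Real.Gamma α) * x ^ (α - 1)
        * Real.exp (-β * x) else 0)
      = Set.indicator (Set.Ioi (0:ℝ)) (fun x => (β ^ α / Real.Gamma α) * (x ^ (α - 1)
        * Real.exp (-(β * x)))) := by
    funext x; simp [Set.indicator_apply, Set.mem_Ioi, mul_assoc, neg_mul]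
  rw [hind, MeasureTheory.integral_indicator measurableSet_Ioi, MeasureTheory.integral_const_mul,
    Real.integral_rpow_mul_exp_neg_mul_Ioi hα hβ, one_div, Real.inv_rpow hβ.le]
  field_simp

lemma exp_neg_mul_Ioi_int (c s : ℝ) (hc : 0 < c) :
    ∫ x in Set.Ioi s, Real.exp (-(c * x)) = c⁻¹ * Real.exp (-(c * s)) := by
  have := integral_comp_mul_left_Ioi (fun x => Real.exp (-x)) s hc
  simpa [integral_exp_neg_Ioi, integral_exp_Iic, smul_eq_mul] using this


/-- Theorem 3.4, case `c0 > 0 = c1` (formulae (3.17)): shifted Gamma-type densities of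
the exponential functional of a jump-telegraph process, and the coupled integral
equations they satisfy. -/
theorem jump_telegraph_exponential_functional_gamma_case
    (c0 l0 l1 y0 y1 : ℝ) (hc0 : 0 < c0)
    (hl0 : 0 < l0) (hl1 : 0 < l1) (hy0 : y0 ≤ 0) (hy1 : y1 = -y0)
    (a α : ℝ) (hadef : a = 1 / c0) (hαdef : α = l0 / c0)
    (f0 f1 : ℝ → ℝ)
    (hf0 : ∀ t, f0 t = if a < t then
        ((l1 * Real.exp y0) ^ α / Real.Gamma α) * (t - a) ^ (α - 1)
          * Real.exp (-(l1 * Real.exp y0) * (t - a)) else 0)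
    (hf1 : ∀ t, f1 t = if a * Real.exp (-y1) < t then
        (l1 ^ (α + 1) / Real.Gamma (α + 1)) * (t - a * Real.exp (-y1)) ^ α
          * Real.exp (-l1 * (t - a * Real.exp (-y1))) else 0) :
    (∀ t, 0 ≤ f0 t) ∧ (∀ t, 0 ≤ f1 t) ∧
    (∫ t, f0 t = 1) ∧ (∫ t, f1 t = 1) ∧
    (∀ t, a < t →
      f0 t = α * (t - a) ^ (α - 1)
        * ∫ u in Set.Ioi (t * Real.exp y0), (u * Real.exp (-y0) - a) ^ (-α) * f1 u) ∧
    (∀ t, a * Real.exp (-y1) < t →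
      f1 t = l1 * Real.exp (-l1 * t)
        * ∫ u in a..(t * Real.exp y1), Real.exp (l1 * u * Real.exp (-y1)) * f0 u) := by
  have hα : 0 < α := by rw [hαdef]; positivity
  have ha : 0 < a := by rw [hadef]; positivity
  have hey : Real.exp (-y1) = Real.exp y0 := by rw [hy1, neg_neg]
  have hβ : 0 < l1 * Real.exp y0 := by positivity
  have hΓα : 0 < Real.Gamma α := Real.Gamma_pos_of_pos hα
  have hΓα1 : Real.Gamma (α + 1) = α * Real.Gamma α := Real.Gamma_add_one hα.ne'
  have hΓα1pos : 0 < Real.Gamma (α + 1) := by rw [hΓα1]; positivity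
  -- nonnegativity
  have h0 : ∀ t, 0 ≤ f0 t := by
    intro t; rw [hf0]; split_ifs with h
    · have h1 : (0:ℝ) ≤ (t - a) ^ (α - 1) := Real.rpow_nonneg (by linarith) _
      have h2 : (0:ℝ) ≤ (l1 * Real.exp y0) ^ α / Real.Gamma α := by positivity
      positivity
    · exact le_refl 0
  have h1 : ∀ t, 0 ≤ f1 t := by
    intro t; rw [hf1]; split_ifs with h
    · have h1 : (0:ℝ) ≤ (t - a * Real.exp (-y1)) ^ α := Real.rpow_nonneg (by linarith) _
      have h2 : (0:ℝ) ≤ l1 ^ (α + 1) / Real.Gamma (α + 1) := by positivity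
      positivity
    · exact le_refl _
  refine ⟨h0, h1, ?_, ?_, ?_, ?_⟩
  · -- ∫ f0 = 1
    simp_rw [hf0]
    exact gamma_shift_norm α (l1 * Real.exp y0) a hα hβ
  · -- ∫ f1 = 1
    have := gamma_shift_norm (α + 1) l1 (a * Real.exp (-y1)) (by linarith) hl1
    simp_rw [hf1, add_sub_cancel_right] at this ⊢
    exact this
  · -- first integral equation
    intro t ht
    set b : ℝ := a * Real.exp (-y1) with hb
    have hbe : b = a * Real.exp y0 := by rw [hb, hey]
    set s : ℝ := t * Real.exp y0 with hs
    have hsb : b < s := by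
      rw [hbe, hs]; exact mul_lt_mul_of_pos_right ht (Real.exp_pos _)
    set K : ℝ := Real.exp (y0 * α) * (l1 ^ (α + 1) / Real.Gamma (α + 1))
        * Real.exp (l1 * (a * Real.exp y0)) with hK
    have hcong : ∀ u ∈ Set.Ioi s,
        (u * Real.exp (-y0) - a) ^ (-α) * f1 u = K * Real.exp (-(l1 * u)) := by
      intro u hu
      have hub : b < u := lt_trans hsb hu
      have hubpos : 0 < u - b := by linarith
      rw [hf1, if_pos hub]
      have hee : Real.exp (-y0) * Real.exp y0 = 1 := by
        rw [← Real.exp_add, neg_add_cancel, Real.exp_zero]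
      have hfac : u * Real.exp (-y0) - a = Real.exp (-y0) * (u - b) := by
        rw [hbe]; linear_combination a * hee
      rw [hfac, Real.mul_rpow (Real.exp_pos _).le hubpos.le, ← Real.exp_mul]
      have hexp1 : Real.exp (-l1 * (u - b)) =
          Real.exp (l1 * (a * Real.exp y0)) * Real.exp (-(l1 * u)) := by
        rw [← Real.exp_add, hbe]; ring_nf
      have hcancel : (u - b) ^ (-α) * (u - b) ^ α = 1 := by
        rw [← Real.rpow_add hubpos, neg_add_cancel, Real.rpow_zero]
      calc Real.exp (-y0 * -α) * (u - b) ^ (-α) *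
            ((l1 ^ (α + 1) / Real.Gamma (α + 1)) * (u - b) ^ α * Real.exp (-l1 * (u - b)))
          = Real.exp (-y0 * -α) * (l1 ^ (α + 1) / Real.Gamma (α + 1))
            * ((u - b) ^ (-α) * (u - b) ^ α) * Real.exp (-l1 * (u - b)) := by ring
        _ = K * Real.exp (-(l1 * u)) := by
            rw [hcancel, hexp1, hK]; ring_nf
    rw [setIntegral_congr_fun measurableSet_Ioi hcong, MeasureTheory.integral_const_mul,
      exp_neg_mul_Ioi_int l1 s hl1, hf0, if_pos ht]
    -- algebra
    rw [hK, hΓα1, Real.rpow_add hl1, Real.rpow_one,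
      Real.mul_rpow hl1.le (Real.exp_pos _).le, ← Real.exp_mul]
    have hexp2 : Real.exp (-(l1 * Real.exp y0) * (t - a)) =
        Real.exp (l1 * (a * Real.exp y0)) * Real.exp (-(l1 * s)) := by
      rw [← Real.exp_add, hs]; ring_nf
    rw [hexp2]
    field_simp
  · -- second integral equation
    intro t ht
    set b : ℝ := a * Real.exp (-y1) with hb
    have hbe : b = a * Real.exp y0 := by rw [hb, hey]
    have hey1 : Real.exp y1 = Real.exp (-y0) := by rw [hy1]
    set c : ℝ := t * Real.exp y1 with hc
    have hac : a < c := by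
      have := mul_lt_mul_of_pos_right ht (Real.exp_pos y1)
      rw [hb, mul_assoc, ← Real.exp_add, neg_add_cancel, Real.exp_zero, mul_one] at this
      exact this
    set D : ℝ := ((l1 * Real.exp y0) ^ α / Real.Gamma α) * Real.exp (l1 * (a * Real.exp y0))
      with hD
    have hcong : ∀ u ∈ Set.Ioc a c,
        Real.exp (l1 * u * Real.exp (-y1)) * f0 u = D * (u - a) ^ (α - 1) := by
      intro u hu
      rw [hf0, if_pos hu.1, hey]
      have hexp3 : Real.exp (l1 * u * Real.exp y0) * Real.exp (-(l1 * Real.exp y0) * (u - a))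
          = Real.exp (l1 * (a * Real.exp y0)) := by
        rw [← Real.exp_add]; ring_nf
      calc Real.exp (l1 * u * Real.exp y0) *
            (((l1 * Real.exp y0) ^ α / Real.Gamma α) * (u - a) ^ (α - 1)
              * Real.exp (-(l1 * Real.exp y0) * (u - a)))
          = ((l1 * Real.exp y0) ^ α / Real.Gamma α)
            * (Real.exp (l1 * u * Real.exp y0) * Real.exp (-(l1 * Real.exp y0) * (u - a)))
            * (u - a) ^ (α - 1) := by ring
        _ = D * (u - a) ^ (α - 1) := by rw [hexp3, hD]
    rw [intervalIntegral.integral_of_le hac.le,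
      setIntegral_congr_fun measurableSet_Ioc hcong, MeasureTheory.integral_const_mul,
      ← intervalIntegral.integral_of_le hac.le]
    have hrint : (∫ u in a..c, (u - a) ^ (α - 1)) = (c - a) ^ α / α := by
      rw [show (fun u : ℝ => (u - a) ^ (α - 1)) = fun u => (fun x : ℝ => x ^ (α - 1)) (u - a)
          from rfl,
        intervalIntegral.integral_comp_sub_right (fun x : ℝ => x ^ (α - 1)) a, sub_self,
        integral_rpow (Or.inl (by linarith)), sub_add_cancel,
        Real.zero_rpow hα.ne', sub_zero]
    rw [hrint, hf1, if_pos ht]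
    -- final algebra
    have hee1 : Real.exp y1 * Real.exp (-y1) = 1 := by
      rw [← Real.exp_add, add_neg_cancel, Real.exp_zero]
    have hca : c - a = Real.exp y1 * (t - b) := by
      rw [hc, hb]; linear_combination a * hee1
    have htb : (0:ℝ) < t - b := by linarith
    rw [hca, Real.mul_rpow (Real.exp_pos _).le htb.le, ← Real.exp_mul, hD, hΓα1,
      Real.rpow_add hl1, Real.rpow_one,
      Real.mul_rpow hl1.le (Real.exp_pos _).le, ← Real.exp_mul]
    have hexp4 : Real.exp (-l1 * (t - b)) =
        Real.exp (-l1 * t) * Real.exp (l1 * (a * Real.exp y0)) := by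
      rw [← Real.exp_add, hbe]; ring_nf
    have hexp5 : Real.exp (y1 * α) * Real.exp (y0 * α) = 1 := by
      rw [← Real.exp_add, hy1]; ring_nf; exact Real.exp_zero
    rw [hexp4]
    field_simp
    linear_combination (norm := ring_nf) -hexp5
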